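/- arXiv:1008.4941 — 2 statements merged into one kernel-verified Lean document; each statement's English description precedes it below -/
import Mathlib

section
/- Let u ⊆ Q induce a connected subgraph of G, let a*, b* ∈ u be distinct, and define W_{a*} = {x ∈ u : d_u(x, a*) ≤ d_u(x, b*)} and W_{b*} = {x ∈ u : d_u(x, b*) < d_u(x, a*)}. Then both W_{a*} and W_{b*} induce connected subgraphs of G. -/
open scoped ENNReal symmDiff

/-- Weight of a path (list of vertices): sum of edge weights of consecutive pairs. -/
noncomputable def pathWeight {V : Type*} (w : V → V → ℝ≥0∞) : List V → ℝ≥0∞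
  | [] => 0
  | [_] => 0
  | a :: b :: l => w a b + pathWeight w (b :: l)
termination_by l => l.length

/-- `l` is a walk from `x` to `y` inside the induced subgraph `G ∩ S`. -/
def IsWalkIn {V : Type*} (G : SimpleGraph V) (S : Set V) (x y : V) (l : List V) : Prop :=
  l.Chain' G.Adj ∧ (∀ v ∈ l, v ∈ S) ∧ l.head? = some x ∧ l.getLast? = some y

/-- Shortest-path distance between `x` and `y` in the induced subgraph `G ∩ S`
(`⊤` if there is no walk). -/
noncomputable def gdist {V : Type*} (G : SimpleGraph V) (w : V → V → ℝ≥0∞)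
    (S : Set V) (x y : V) : ℝ≥0∞ :=
  sInf (pathWeight w '' {l | IsWalkIn G S x y l})

/-- `S` is a nonempty subset inducing a connected subgraph of `G`. -/
def ConnectedIn {V : Type*} (G : SimpleGraph V) (S : Set V) : Prop :=
  S.Nonempty ∧ ∀ x ∈ S, ∀ y ∈ S, ∃ l, IsWalkIn G S x y l

/-- Two subsets are adjacent if some edge of `G` joins them. -/
def AdjSets {V : Type*} (G : SimpleGraph V) (A B : Set V) : Prop :=
  ∃ a ∈ A, ∃ b ∈ B, G.Adj a b

/-- One-center cost `H₁(h; S) = ∑_{k ∈ S} d_S(h,k) φ(k)`. -/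
noncomputable def H1 {V : Type*} [Fintype V] (G : SimpleGraph V) (w : V → V → ℝ≥0∞)
    (φ : V → ℝ≥0∞) (h : V) (S : Set V) : ℝ≥0∞ :=
  ∑ k : V, S.indicator (fun k => gdist G w S h k * φ k) k

/-- The set of minimizers of `H₁(·; S)` over `S`. -/
def argminH1 {V : Type*} [Fintype V] (G : SimpleGraph V) (w : V → V → ℝ≥0∞)
    (φ : V → ℝ≥0∞) (S : Set V) : Set V :=
  {h ∈ S | ∀ h' ∈ S, H1 G w φ h S ≤ H1 G w φ h' S}

/-- Generalized centroid: least element (total order on `V`) of the argmin of `H₁(·; S)`. -/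
noncomputable def Cd {V : Type*} [Fintype V] [LinearOrder V] [Nonempty V]
    (G : SimpleGraph V) (w : V → V → ℝ≥0∞) (φ : V → ℝ≥0∞) (S : Set V) : V :=
  if hne : ((argminH1 G w φ S).toFinite.toFinset).Nonempty then
    (argminH1 G w φ S).toFinite.toFinset.min' hne
  else Classical.arbitrary V

/-- Connected `N`-partition of the vertex set. -/
def IsConnPart {V : Type*} (G : SimpleGraph V) {N : ℕ} (p : Fin N → Set V) : Prop :=
  (⋃ i, p i) = Set.univ ∧ (∀ i j, i ≠ j → p i ∩ p j = ∅) ∧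
    (∀ i, (p i).Nonempty) ∧ (∀ i, ConnectedIn G (p i))

/-- Multicenter cost `H_multicenter(p, c) = ∑ᵢ H₁(cᵢ; pᵢ)`. -/
noncomputable def Hmc {V : Type*} [Fintype V] (G : SimpleGraph V) (w : V → V → ℝ≥0∞)
    (φ : V → ℝ≥0∞) {N : ℕ} (p : Fin N → Set V) (c : Fin N → V) : ℝ≥0∞ :=
  ∑ i, H1 G w φ (c i) (p i)

/-- `H_exp(p) = ∑ᵢ H₁(Cd(pᵢ); pᵢ)`. -/
noncomputable def Hexp {V : Type*} [Fintype V] [LinearOrder V] [Nonempty V]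
    (G : SimpleGraph V) (w : V → V → ℝ≥0∞) (φ : V → ℝ≥0∞) {N : ℕ}
    (p : Fin N → Set V) : ℝ≥0∞ :=
  ∑ i, H1 G w φ (Cd G w φ (p i)) (p i)

/-- `p` is a Voronoi partition of `Q` generated by `c` (distances `d_G` in the full graph). -/
def IsVoronoi {V : Type*} (G : SimpleGraph V) (w : V → V → ℝ≥0∞) {N : ℕ}
    (p : Fin N → Set V) (c : Fin N → V) : Prop :=
  ∀ i, c i ∈ p i ∧ ∀ k ∈ p i, ∀ j, j ≠ i →
    gdist G w Set.univ k (c i) ≤ gdist G w Set.univ k (c j)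

/-- Two-center cost `D(a,b) = ∑_{h ∈ u} min{d_u(h,a), d_u(h,b)}`. -/
noncomputable def Dtwo {V : Type*} [Fintype V] (G : SimpleGraph V) (w : V → V → ℝ≥0∞)
    (u : Set V) (a b : V) : ℝ≥0∞ :=
  ∑ h : V, u.indicator (fun h => min (gdist G w u h a) (gdist G w u h b)) h

/-- `p` is a pairwise-optimal connected `N`-partition. -/
def PairwiseOptimal {V : Type*} [Fintype V] [LinearOrder V] [Nonempty V]
    (G : SimpleGraph V) (w : V → V → ℝ≥0∞) (φ : V → ℝ≥0∞) {N : ℕ}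
    (p : Fin N → Set V) : Prop :=
  IsConnPart G p ∧ ∀ i j : Fin N, i ≠ j → AdjSets G (p i) (p j) →
    H1 G w φ (Cd G w φ (p i)) (p i) + H1 G w φ (Cd G w φ (p j)) (p j)
      = ⨅ a ∈ p i ∪ p j, ⨅ b ∈ p i ∪ p j, Dtwo G w (p i ∪ p j) a b

/-- `p` is centroidal Voronoi in pairs. -/
def CVIP {V : Type*} [Fintype V] [LinearOrder V] [Nonempty V]
    (G : SimpleGraph V) (w : V → V → ℝ≥0∞) (φ : V → ℝ≥0∞) {N : ℕ}
    (p : Fin N → Set V) : Prop :=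
  ∀ i j : Fin N, i ≠ j → AdjSets G (p i) (p j) → ∀ k ∈ p i,
    gdist G w (p i ∪ p j) k (Cd G w φ (p i)) ≤ gdist G w (p i ∪ p j) k (Cd G w φ (p j))

section VCCAux

variable {V : Type*} {G : SimpleGraph V} {w : V → V → ℝ≥0∞} {S : Set V}

lemma pathWeight_nil : pathWeight w ([] : List V) = 0 := by simp [pathWeight]

lemma pathWeight_single (a : V) : pathWeight w [a] = 0 := by simp [pathWeight]

lemma pathWeight_cons_cons (a b : V) (l : List V) :
    pathWeight w (a :: b :: l) = w a b + pathWeight w (b :: l) := by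
  rw [pathWeight]

lemma pathWeight_split (w : V → V → ℝ≥0∞) (v : V) (l2 : List V) :
    ∀ l1 : List V, pathWeight w (l1 ++ v :: l2)
      = pathWeight w (l1 ++ [v]) + pathWeight w (v :: l2)
  | [] => by simp [pathWeight_single]
  | [a] => by simp [pathWeight_cons_cons, pathWeight_single]
  | a :: c :: t => by
    have ih := pathWeight_split w v l2 (c :: t)
    simp only [List.cons_append, pathWeight_cons_cons] at *
    rw [ih, add_assoc]

lemma pathWeight_ne_top (hw : ∀ a b, G.Adj a b → 0 < w a b ∧ w a b ≠ ⊤) :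
    ∀ {l : List V}, l.Chain' G.Adj → pathWeight w l ≠ ⊤
  | [], _ => by simp [pathWeight_nil]
  | [a], _ => by simp [pathWeight_single]
  | a :: c :: t, h => by
    simp only [List.Chain'] at h
    rw [List.isChain_cons_cons] at h
    rw [pathWeight_cons_cons]
    exact ENNReal.add_ne_top.2 ⟨(hw a c h.1).2, pathWeight_ne_top hw h.2⟩

lemma gdist_le_pathWeight {x y : V} {l : List V} (h : IsWalkIn G S x y l) :
    gdist G w S x y ≤ pathWeight w l :=
  sInf_le ⟨l, h, rfl⟩

lemma IsWalkIn.ne_nil {x y : V} {l : List V} (h : IsWalkIn G S x y l) : l ≠ [] := by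
  rintro rfl; simp [IsWalkIn] at h

lemma gdist_self {x : V} (hx : x ∈ S) : gdist G w S x x = 0 := by
  refine le_antisymm ?_ zero_le
  have : IsWalkIn G S x x [x] := by
    refine ⟨List.isChain_singleton _, by simpa using hx, rfl, rfl⟩
  simpa [pathWeight_single] using gdist_le_pathWeight (w := w) this

/-- Splitting a walk at a vertex on it. -/
lemma walk_split {x y v : V} {l : List V} (h : IsWalkIn G S x y l) (hv : v ∈ l) :
    ∃ l1 l2, l = l1 ++ v :: l2 ∧ IsWalkIn G S x v (l1 ++ [v]) ∧
      IsWalkIn G S v y (v :: l2) := by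
  obtain ⟨l1, l2, rfl⟩ := List.append_of_mem hv
  obtain ⟨hc, hm, hh, hg⟩ := h
  have hc' : (l1 ++ [v]).Chain' G.Adj ∧ (v :: l2).Chain' G.Adj ∧ True := by
    simp only [List.Chain'] at hc ⊢
    rw [show l1 ++ v :: l2 = (l1 ++ [v]) ++ l2 by simp, List.isChain_append] at hc
    obtain ⟨h1, h2, h3⟩ := hc
    refine ⟨h1, ?_, trivial⟩
    rw [List.isChain_cons]
    refine ⟨fun z hz => h3 v (by simp) z hz, h2⟩
  refine ⟨l1, l2, rfl, ⟨hc'.1, ?_, ?_, by simp⟩, ⟨hc'.2.1, ?_, rfl, ?_⟩⟩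
  · intro z hz
    exact hm z (by simp at hz ⊢; tauto)
  · rw [← hh]
    cases l1 <;> simp
  · intro z hz
    exact hm z (by simp at hz ⊢; tauto)
  · rw [← hg, List.getLast?_append_cons]

/-- Composing walks. -/
lemma walk_append {x m y : V} {l1 l2 : List V} (h1 : IsWalkIn G S x m l1)
    (h2 : IsWalkIn G S m y l2) : IsWalkIn G S x y (l1 ++ l2.tail) := by
  obtain ⟨hc1, hm1, hh1, hg1⟩ := h1
  obtain ⟨hc2, hm2, hh2, hg2⟩ := h2
  obtain ⟨t, rfl⟩ : ∃ t, l2 = m :: t := by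
    cases l2 with
    | nil => simp at hh2
    | cons c t => exact ⟨t, by simp at hh2; rw [hh2]⟩
  refine ⟨?_, ?_, ?_, ?_⟩
  · simp only [List.Chain'] at hc1 hc2 ⊢
    rw [List.isChain_append]
    refine ⟨hc1, hc2.tail, fun z hz q hq => ?_⟩
    have hzm : z = m := by
      have := hg1; rw [Option.mem_def] at hz
      rw [hz] at this; simpa using this
    subst hzm
    cases t with
    | nil => simp at hq
    | cons c t' =>
      simp at hq; subst hq
      exact (List.isChain_cons_cons.1 hc2).1
  · intro z hz
    simp only [List.mem_append] at hz
    rcases hz with hz | hz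
    · exact hm1 z hz
    · exact hm2 z (List.mem_cons_of_mem _ hz)
  · rw [List.head?_append_of_ne_nil _ (by rintro rfl; simp at hh1), hh1]
  · cases t with
    | nil =>
      have : m = y := by simpa using hg2
      subst this; simpa using hg1
    | cons c t' =>
      rw [List.getLast?_append_of_ne_nil _ (by simp)]
      rw [List.getLast?_cons_cons] at hg2; exact hg2

/-- Reversing walks. -/
lemma walk_reverse {x y : V} {l : List V} (h : IsWalkIn G S x y l) :
    IsWalkIn G S y x l.reverse := by
  obtain ⟨hc, hm, hh, hg⟩ := h
  refine ⟨?_, fun z hz => hm z (by simpa using hz), ?_, ?_⟩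
  · simp only [List.Chain'] at hc ⊢
    rw [List.isChain_reverse]
    exact hc.imp (fun a b hab => hab.symm)
  · rwa [List.head?_reverse]
  · rwa [List.getLast?_reverse]

/-- Removing a duplicated stretch from a walk. -/
lemma walk_drop {x y v : V} {l1 l2 l3 : List V}
    (h : IsWalkIn G S x y (l1 ++ v :: (l2 ++ v :: l3))) :
    IsWalkIn G S x y (l1 ++ v :: l3) ∧
      pathWeight w (l1 ++ v :: l3) ≤ pathWeight w (l1 ++ v :: (l2 ++ v :: l3)) := by
  obtain ⟨hc, hm, hh, hg⟩ := h
  constructor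
  · refine ⟨?_, ?_, ?_, ?_⟩
    · simp only [List.Chain'] at hc ⊢
      rw [show l1 ++ v :: (l2 ++ v :: l3) = (l1 ++ [v]) ++ (l2 ++ v :: l3) by simp,
        List.isChain_append] at hc
      obtain ⟨h1, h2, h3⟩ := hc
      rw [show l1 ++ v :: l3 = (l1 ++ [v]) ++ l3 by simp, List.isChain_append]
      refine ⟨h1, ?_, fun z hz q hq => ?_⟩
      · rw [show l2 ++ v :: l3 = (l2 ++ [v]) ++ l3 by simp, List.isChain_append] at h2
        exact h2.2.1
      · have hzv : z = v := by
          rw [Option.mem_def, List.getLast?_concat] at hz; exact (Option.some_inj.1 hz.symm)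
        rw [hzv]
        rw [show l2 ++ v :: l3 = (l2 ++ [v]) ++ l3 by simp, List.isChain_append] at h2
        exact h2.2.2 v (by rw [Option.mem_def, List.getLast?_concat]) q hq
    · intro z hz
      refine hm z ?_
      simp only [List.mem_append, List.mem_cons] at hz ⊢; tauto
    · rw [← hh]
      cases l1 <;> simp
    · have hg' : (v :: l3).getLast? = some y := by
        rw [← hg, List.getLast?_append_cons,
          show v :: (l2 ++ v :: l3) = (v :: l2) ++ v :: l3 from by simp,
          List.getLast?_append_cons]
      rw [List.getLast?_append_cons]; exact hg'
  · have e2 : pathWeight w (v :: (l2 ++ v :: l3))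
        = pathWeight w (v :: l2 ++ [v]) + pathWeight w (v :: l3) := by
      simpa using pathWeight_split w v l3 (v :: l2)
    rw [pathWeight_split w v (l2 ++ v :: l3) l1, e2, pathWeight_split w v l3 l1,
      ← add_assoc]
    exact add_le_add_left (le_add_right le_rfl) _

lemma exists_dup_split {l : List V} (h : ¬ l.Nodup) :
    ∃ (v : V) (l1 l2 l3 : List V), l = l1 ++ v :: (l2 ++ v :: l3) := by
  obtain ⟨v, hv⟩ := List.exists_duplicate_iff_not_nodup.2 h
  clear h
  induction hv with
  | @cons_mem l hmem =>
    obtain ⟨s, t, rfl⟩ := List.append_of_mem hmem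
    exact ⟨v, [], s, t, rfl⟩
  | @cons_duplicate y l _ ih =>
    obtain ⟨v', l1, l2, l3, rfl⟩ := ih
    exact ⟨v', y :: l1, l2, l3, rfl⟩

lemma exists_nodup_walk {x y : V} :
    ∀ n (l : List V), l.length ≤ n → IsWalkIn G S x y l →
    ∃ l', IsWalkIn G S x y l' ∧ l'.Nodup ∧ pathWeight w l' ≤ pathWeight w l := by
  intro n
  induction n with
  | zero => intro l hl h; exact absurd (List.length_eq_zero_iff.1 (Nat.le_zero.1 hl)) h.ne_nil
  | succ n ih =>
    intro l hl h
    by_cases hnd : l.Nodup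
    · exact ⟨l, h, hnd, le_rfl⟩
    · obtain ⟨v, l1, l2, l3, rfl⟩ := exists_dup_split hnd
      obtain ⟨h', hle⟩ := walk_drop (w := w) h
      obtain ⟨l', hw', hnd', hle'⟩ := ih (l1 ++ v :: l3) (by simp at hl ⊢; omega) h'
      exact ⟨l', hw', hnd', hle'.trans hle⟩

lemma exists_min_walk [Finite V] {x y : V} (h : gdist G w S x y ≠ ⊤) :
    ∃ l, IsWalkIn G S x y l ∧ pathWeight w l = gdist G w S x y := by
  have hne : {l | IsWalkIn G S x y l}.Nonempty := by
    by_contra h'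
    rw [Set.not_nonempty_iff_eq_empty] at h'
    rw [gdist, h'] at h
    simp at h
  set T : Set (List V) := {l | IsWalkIn G S x y l ∧ l.Nodup} with hT
  have hsub : ∀ l ∈ {l | IsWalkIn G S x y l}, ∃ l' ∈ T, pathWeight w l' ≤ pathWeight w l :=
    fun l hl => by
      obtain ⟨l', h1, h2, h3⟩ := exists_nodup_walk l.length l le_rfl hl
      exact ⟨l', ⟨h1, h2⟩, h3⟩
  have hTne : T.Nonempty := by
    obtain ⟨l, hl⟩ := hne
    obtain ⟨l', hl', _⟩ := hsub l hl
    exact ⟨l', hl'⟩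
  have hTfin : T.Finite := by
    cases nonempty_fintype V
    exact (List.finite_length_le V (Fintype.card V)).subset (fun l hl => hl.2.length_le_card)
  have heq : gdist G w S x y = sInf (pathWeight w '' T) := by
    refine le_antisymm (sInf_le_sInf (Set.image_mono fun l hl => hl.1)) ?_
    refine le_sInf ?_
    rintro b ⟨l, hl, rfl⟩
    obtain ⟨l', hl', hle⟩ := hsub l hl
    exact le_trans (sInf_le ⟨l', hl', rfl⟩) hle
  have hmem : sInf (pathWeight w '' T) ∈ pathWeight w '' T :=
    Set.Nonempty.csInf_mem (hTne.image _) (hTfin.image _)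
  obtain ⟨l, hl, hval⟩ := hmem
  exact ⟨l, hl.1, by rw [hval, heq]⟩

lemma gdist_ne_zero [Finite V] (hw : ∀ a b, G.Adj a b → 0 < w a b ∧ w a b ≠ ⊤)
    {x y : V} (hxy : x ≠ y) : gdist G w S x y ≠ 0 := by
  intro h0
  have h : gdist G w S x y ≠ ⊤ := by rw [h0]; simp
  obtain ⟨l, hl, hval⟩ := exists_min_walk h
  rw [h0] at hval
  obtain ⟨hc, hm, hh, hg⟩ := hl
  obtain ⟨t, rfl⟩ : ∃ t, l = x :: t := by
    cases l with
    | nil => simp at hh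
    | cons c t => exact ⟨t, by simp at hh; rw [hh]⟩
  cases t with
  | nil => simp at hg; exact hxy hg
  | cons c t' =>
    rw [pathWeight_cons_cons] at hval
    have : w x c = 0 := by
      have := add_eq_zero.1 hval
      exact this.1
    exact absurd this (ne_of_gt (hw x c (List.isChain_cons_cons.1 hc).1).1)

/-- Every vertex on a minimizing walk from `x` to `t` in `u` admits the key
distance decomposition. -/
lemma on_shortest_walk [Finite V] (hw : ∀ a b, G.Adj a b → 0 < w a b ∧ w a b ≠ ⊤)
    {u : Set V} {x t v : V} {l : List V} (hl : IsWalkIn G u x t l)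
    (hmin : pathWeight w l = gdist G w u x t) (hv : v ∈ l) :
    ∃ P Q : ℝ≥0∞, P ≠ ⊤ ∧ P + Q = gdist G w u x t ∧ gdist G w u v t ≤ Q ∧
      ∀ o, gdist G w u x o ≤ P + gdist G w u v o := by
  obtain ⟨l1, l2, rfl, hpre, hsuf⟩ := walk_split hl hv
  refine ⟨pathWeight w (l1 ++ [v]), pathWeight w (v :: l2),
    pathWeight_ne_top hw hpre.1, ?_, gdist_le_pathWeight hsuf, ?_⟩
  · rw [← hmin]; exact (pathWeight_split w v l2 l1).symm
  · intro o
    by_cases ho : gdist G w u v o = ⊤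
    · rw [ho]; simp
    · obtain ⟨m, hm, hmval⟩ := exists_min_walk ho
      have hcomb := walk_append hpre hm
      have := gdist_le_pathWeight (w := w) hcomb
      refine this.trans (le_of_eq ?_)
      obtain ⟨m', rfl⟩ : ∃ m', m = v :: m' := by
        cases m with
        | nil => simp [IsWalkIn] at hm
        | cons c t => exact ⟨t, by have := hm.2.2.1; simp at this; rw [this]⟩
      rw [show (l1 ++ [v]) ++ (v :: m').tail = l1 ++ v :: m' by simp,
        pathWeight_split w v m' l1, hmval]

/-- A minimizing walk in `u` exists from any `x ∈ u` to any `t ∈ u`. -/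
lemma exists_min_walk_of_connected [Finite V]
    (hw : ∀ a b, G.Adj a b → 0 < w a b ∧ w a b ≠ ⊤) {u : Set V}
    (hu : ConnectedIn G u) {x t : V} (hx : x ∈ u) (ht : t ∈ u) :
    ∃ l, IsWalkIn G u x t l ∧ pathWeight w l = gdist G w u x t := by
  obtain ⟨l0, hl0⟩ := hu.2 x hx t ht
  have hfin : gdist G w u x t ≠ ⊤ :=
    fun h => pathWeight_ne_top hw hl0.1
      (eq_top_iff.2 (h ▸ gdist_le_pathWeight hl0))
  exact exists_min_walk hfin

end VCCAux

variable {V : Type*} [Fintype V] [LinearOrder V] [Nonempty V]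

theorem voronoi_cells_connected (G : SimpleGraph V) (w : V → V → ℝ≥0∞)
    (hw : ∀ a b, G.Adj a b → 0 < w a b ∧ w a b ≠ ⊤) (hwsymm : ∀ a b, w a b = w b a)
    (u : Set V) (hu : ConnectedIn G u) (a b : V) (ha : a ∈ u) (hb : b ∈ u) (hab : a ≠ b) :
    ConnectedIn G {x ∈ u | gdist G w u x a ≤ gdist G w u x b} ∧
    ConnectedIn G {x ∈ u | gdist G w u x b < gdist G w u x a} := by
  have conn : ∀ (W : Set V) (c : V), c ∈ W → (∀ x ∈ W, ∃ l, IsWalkIn G W x c l) →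
      ConnectedIn G W := by
    intro W c hc hkey
    refine ⟨⟨c, hc⟩, fun x hx y hy => ?_⟩
    obtain ⟨lx, hlx⟩ := hkey x hx
    obtain ⟨ly, hly⟩ := hkey y hy
    exact ⟨lx ++ (ly.reverse).tail, walk_append hlx (walk_reverse hly)⟩
  constructor
  · refine conn _ a ⟨ha, by rw [gdist_self ha]; exact zero_le⟩ ?_
    rintro x ⟨hxu, hxd⟩
    obtain ⟨l, hl, hmin⟩ := exists_min_walk_of_connected hw hu hxu ha
    refine ⟨l, hl.1, ?_, hl.2.2.1, hl.2.2.2⟩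
    intro v hv
    refine ⟨hl.2.1 v hv, ?_⟩
    obtain ⟨P, Q, hPtop, hPQ, hQ, hup⟩ := on_shortest_walk hw hl hmin hv
    have hle : P + Q ≤ P + gdist G w u v b := by
      rw [hPQ]; exact hxd.trans (hup b)
    exact hQ.trans ((ENNReal.add_le_add_iff_left hPtop).1 hle)
  · refine conn _ b ⟨hb, ?_⟩ ?_
    · rw [gdist_self hb]
      exact pos_iff_ne_zero.2 (gdist_ne_zero hw (Ne.symm hab))
    rintro x ⟨hxu, hxd⟩
    obtain ⟨l, hl, hmin⟩ := exists_min_walk_of_connected hw hu hxu hb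
    refine ⟨l, hl.1, ?_, hl.2.2.1, hl.2.2.2⟩
    intro v hv
    refine ⟨hl.2.1 v hv, ?_⟩
    obtain ⟨P, Q, hPtop, hPQ, hQ, hup⟩ := on_shortest_walk hw hl hmin hv
    have hlt : P + Q < P + gdist G w u v a := by
      rw [hPQ]; exact hxd.trans_le (hup a)
    exact hQ.trans_lt ((ENNReal.add_lt_add_iff_left hPtop).1 hlt)
end

section
/- Let u ⊆ Q be a connected subset, a, b ∈ u distinct, and W_a = {x ∈ u : d_u(x,a) ≤ d_u(x,b)}, W_b = {x ∈ u : d_u(x,b) < d_u(x,a)}. Then for all x ∈ W_a, d_{W_a}(x, a) = d_u(x, a), and for all x ∈ W_b, d_{W_b}(x, b) = d_u(x, b), i.e., shortest-path distances to the respective center are preserved when restricting to the Voronoi cell. -/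
open scoped ENNReal symmDiff

section Aux

variable {V' : Type*}

lemma aux_pw_cons (w : V' → V' → ℝ≥0∞) (a b : V') (l : List V') :
    pathWeight w (a :: b :: l) = w a b + pathWeight w (b :: l) := by rw [pathWeight]

lemma aux_pw_split (w : V' → V' → ℝ≥0∞) (v : V') (p m : List V') :
    pathWeight w (p ++ v :: m) = pathWeight w (p ++ [v]) + pathWeight w (v :: m) := by
  induction p with
  | nil => simp [pathWeight]
  | cons a p ih =>
    cases p with
    | nil => simp [aux_pw_cons, pathWeight]
    | cons c p' =>
      simp only [List.cons_append, aux_pw_cons] at *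
      rw [ih, add_assoc]

lemma aux_pw_ne_top {G : SimpleGraph V'} {w : V' → V' → ℝ≥0∞}
    (hw : ∀ a b, G.Adj a b → 0 < w a b ∧ w a b ≠ ⊤) :
    ∀ {l : List V'}, l.Chain' G.Adj → pathWeight w l ≠ ⊤
  | [] => by simp [pathWeight]
  | [a] => by simp [pathWeight]
  | a :: b :: l => fun hc => by
    rw [aux_pw_cons]
    have h1 := (hw a b (List.isChain_cons_cons.mp hc).1).2
    have h2 := aux_pw_ne_top hw (List.isChain_cons_cons.mp hc).2
    exact ENNReal.add_ne_top.mpr ⟨h1, h2⟩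

lemma aux_isWalkIn_decomp {G : SimpleGraph V'} {S : Set V'} {x y v : V'} {p m : List V'}
    (h : IsWalkIn G S x y (p ++ v :: m)) :
    IsWalkIn G S x v (p ++ [v]) ∧ IsWalkIn G S v y (v :: m) := by
  obtain ⟨hc, hm, hh, hl⟩ := h
  simp only [List.Chain'] at hc
  rw [List.isChain_append] at hc
  obtain ⟨hc1, hc2, hc3⟩ := hc
  refine ⟨⟨?_, ?_, ?_, ?_⟩, ⟨hc2, ?_, rfl, ?_⟩⟩
  · simp only [List.Chain']
    rw [List.isChain_append]
    refine ⟨hc1, List.isChain_singleton v, ?_⟩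
    intro a hha bb hbb
    simp only [List.head?_cons, Option.mem_def, Option.some.injEq] at hbb
    subst hbb
    exact hc3 a hha v (by simp)
  · intro z hz
    apply hm
    simp only [List.mem_append, List.mem_singleton, List.mem_cons] at hz ⊢
    tauto
  · cases p with
    | nil => simpa using hh
    | cons a p' => simpa using hh
  · simp [List.getLast?_concat]
  · intro z hz
    apply hm
    simp only [List.mem_append, List.mem_cons] at hz ⊢
    tauto
  · rw [List.getLast?_append] at hl
    simpa using hl

lemma aux_isWalkIn_concat {G : SimpleGraph V'} {S : Set V'} {x y v : V'} {p m : List V'}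
    (h1 : IsWalkIn G S x v (p ++ [v])) (h2 : IsWalkIn G S v y (v :: m)) :
    IsWalkIn G S x y (p ++ v :: m) := by
  obtain ⟨hc1, hm1, hh1, hl1⟩ := h1
  obtain ⟨hc2, hm2, hh2, hl2⟩ := h2
  simp only [List.Chain'] at hc1
  rw [List.isChain_append] at hc1
  obtain ⟨hp, _, h3⟩ := hc1
  refine ⟨?_, ?_, ?_, ?_⟩
  · simp only [List.Chain']
    rw [List.isChain_append]
    refine ⟨hp, hc2, ?_⟩
    intro a hha bb hbb
    simp only [List.head?_cons, Option.mem_def, Option.some.injEq] at hbb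
    subst hbb
    exact h3 a hha v (by simp)
  · intro z hz
    simp only [List.mem_append, List.mem_cons] at hz
    rcases hz with h | h | h
    · exact hm1 z (by simp [h])
    · exact hm2 z (by simp [h])
    · exact hm2 z (by simp [h])
  · cases p with
    | nil => simpa using hh1
    | cons a p' => simpa using hh1
  · rw [List.getLast?_append]
    simpa using hl2

lemma aux_gdist_le_pathWeight {G : SimpleGraph V'} (w : V' → V' → ℝ≥0∞) {S : Set V'}
    {x y : V'} {l : List V'} (h : IsWalkIn G S x y l) :
    gdist G w S x y ≤ pathWeight w l := sInf_le ⟨l, h, rfl⟩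

lemma aux_gdist_anti (G : SimpleGraph V') (w : V' → V' → ℝ≥0∞) {S T : Set V'}
    (hST : S ⊆ T) (x y : V') : gdist G w T x y ≤ gdist G w S x y := by
  apply sInf_le_sInf
  apply Set.image_mono
  intro l hl
  exact ⟨hl.1, fun v hv => hST (hl.2.1 v hv), hl.2.2⟩

lemma aux_exists_walk_lt {G : SimpleGraph V'} {w : V' → V' → ℝ≥0∞} {S : Set V'}
    {x y : V'} {c : ℝ≥0∞} (h : gdist G w S x y < c) :
    ∃ l, IsWalkIn G S x y l ∧ pathWeight w l < c := by
  rw [gdist, sInf_lt_iff] at h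
  obtain ⟨_, ⟨l, hl, rfl⟩, h⟩ := h
  exact ⟨l, hl, h⟩

lemma aux_gdist_self {G : SimpleGraph V'} (w : V' → V' → ℝ≥0∞) {S : Set V'} {y : V'}
    (hy : y ∈ S) : gdist G w S y y = 0 := by
  refine le_antisymm ?_ zero_le
  have h : IsWalkIn G S y y [y] := ⟨List.isChain_singleton y, by simpa using hy, rfl, rfl⟩
  simpa [pathWeight] using aux_gdist_le_pathWeight w h

lemma aux_gdist_triangle {G : SimpleGraph V'} (w : V' → V' → ℝ≥0∞) {S : Set V'}
    {x v : V'} {p : List V'} (h : IsWalkIn G S x v (p ++ [v])) (y : V') :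
    gdist G w S x y ≤ pathWeight w (p ++ [v]) + gdist G w S v y := by
  have heq : pathWeight w (p ++ [v]) + gdist G w S v y
      = ⨅ l : {l : List V' // IsWalkIn G S v y l}, pathWeight w (p ++ [v]) + pathWeight w l.1 := by
    rw [gdist, sInf_image', ENNReal.add_iInf]
    rfl
  rw [heq]
  apply le_iInf
  rintro ⟨m, hm⟩
  obtain ⟨m', rfl⟩ : ∃ m', m = v :: m' := by
    cases m with
    | nil => simp [IsWalkIn] at hm
    | cons c m' =>
      obtain ⟨_, _, hh, _⟩ := hm
      simp only [List.head?_cons, Option.some.injEq] at hh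
      exact ⟨m', by rw [hh]⟩
  rw [← aux_pw_split]
  exact aux_gdist_le_pathWeight w (aux_isWalkIn_concat h hm)

lemma aux_gdist_ne_top {G : SimpleGraph V'} {w : V' → V' → ℝ≥0∞}
    (hw : ∀ a b, G.Adj a b → 0 < w a b ∧ w a b ≠ ⊤) {S : Set V'}
    (hconn : ConnectedIn G S) {x y : V'} (hx : x ∈ S) (hy : y ∈ S) :
    gdist G w S x y ≠ ⊤ := by
  obtain ⟨l, hl⟩ := hconn.2 x hx y hy
  exact ne_top_of_le_ne_top (aux_pw_ne_top hw hl.1) (aux_gdist_le_pathWeight w hl)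

lemma aux_key {G : SimpleGraph V'} {w : V' → V' → ℝ≥0∞} {u W : Set V'} (hWu : W ⊆ u)
    {x a : V'} (hfin : gdist G w u x a ≠ ⊤) {δ : ℝ≥0∞} (hδ : 0 < δ)
    (hsep : ∀ v ∈ u, v ∉ W → ∀ p m, IsWalkIn G u x v (p ++ [v]) →
      IsWalkIn G u v a (v :: m) →
      gdist G w u x a + δ ≤ pathWeight w (p ++ [v]) + pathWeight w (v :: m)) :
    gdist G w W x a = gdist G w u x a := by
  refine le_antisymm ?_ (aux_gdist_anti G w hWu x a)
  apply le_of_forall_gt_imp_ge_of_dense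
  intro c hc
  have hlt : gdist G w u x a < min c (gdist G w u x a + δ) :=
    lt_min hc (ENNReal.lt_add_right hfin hδ.ne')
  obtain ⟨l, hl, hpw⟩ := aux_exists_walk_lt hlt
  have hmemW : ∀ v ∈ l, v ∈ W := by
    intro v hv
    by_contra hvW
    obtain ⟨p, m, rfl⟩ := List.append_of_mem hv
    obtain ⟨h1, h2⟩ := aux_isWalkIn_decomp hl
    have hs := hsep v (hl.2.1 v hv) hvW p m h1 h2
    rw [← aux_pw_split] at hs
    exact lt_irrefl _ (lt_of_le_of_lt hs (lt_of_lt_of_le hpw (min_le_right _ _)))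
  have hW : IsWalkIn G W x a l := ⟨hl.1, hmemW, hl.2.2.1, hl.2.2.2⟩
  exact le_trans (aux_gdist_le_pathWeight w hW)
    (le_of_lt (lt_of_lt_of_le hpw (min_le_left _ _)))

end Aux

variable {V : Type*} [Fintype V] [LinearOrder V] [Nonempty V]

theorem dist_preserved_in_cell (G : SimpleGraph V) (w : V → V → ℝ≥0∞)
    (hw : ∀ a b, G.Adj a b → 0 < w a b ∧ w a b ≠ ⊤) (hwsymm : ∀ a b, w a b = w b a)
    (u : Set V) (hu : ConnectedIn G u) (a b : V) (ha : a ∈ u) (hb : b ∈ u) (hab : a ≠ b) :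
    (∀ x ∈ {x ∈ u | gdist G w u x a ≤ gdist G w u x b},
      gdist G w {x ∈ u | gdist G w u x a ≤ gdist G w u x b} x a = gdist G w u x a) ∧
    (∀ x ∈ {x ∈ u | gdist G w u x b < gdist G w u x a},
      gdist G w {x ∈ u | gdist G w u x b < gdist G w u x a} x b = gdist G w u x b) := by
  classical
  constructor
  · -- W_a case
    intro x hx
    obtain ⟨hxu, hxab⟩ := hx
    apply aux_key (fun y hy => hy.1) (aux_gdist_ne_top hw hu hxu ha)
      (δ := if hA : (Finset.univ.filter
          (fun v => v ∈ u ∧ gdist G w u v b < gdist G w u v a)).Nonempty then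
        (Finset.univ.filter (fun v => v ∈ u ∧ gdist G w u v b < gdist G w u v a)).inf' hA
          (fun v => gdist G w u v a - gdist G w u v b) else 1)
    · split
      · next hA =>
        rw [Finset.lt_inf'_iff]
        intro v hv
        rw [Finset.mem_filter] at hv
        exact tsub_pos_of_lt hv.2.2
      · exact zero_lt_one
    · intro v hvu hvW p m h1 h2
      have hvba : gdist G w u v b < gdist G w u v a := by
        by_contra hcon
        exact hvW ⟨hvu, not_lt.mp hcon⟩
      have hvA : v ∈ Finset.univ.filter
          (fun v => v ∈ u ∧ gdist G w u v b < gdist G w u v a) := by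
        rw [Finset.mem_filter]; exact ⟨Finset.mem_univ v, hvu, hvba⟩
      rw [dif_pos ⟨v, hvA⟩]
      have hδle : (Finset.univ.filter
            (fun v => v ∈ u ∧ gdist G w u v b < gdist G w u v a)).inf' ⟨v, hvA⟩
            (fun v => gdist G w u v a - gdist G w u v b)
          ≤ gdist G w u v a - gdist G w u v b := Finset.inf'_le _ hvA
      calc gdist G w u x a + _ ≤ gdist G w u x b + _ := add_le_add_left hxab _
        _ ≤ (pathWeight w (p ++ [v]) + gdist G w u v b) + _ :=
            add_le_add_left (aux_gdist_triangle w h1 b) _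
        _ ≤ (pathWeight w (p ++ [v]) + gdist G w u v b)
            + (gdist G w u v a - gdist G w u v b) := add_le_add_right hδle _
        _ = pathWeight w (p ++ [v])
            + ((gdist G w u v a - gdist G w u v b) + gdist G w u v b) := by ring
        _ = pathWeight w (p ++ [v]) + gdist G w u v a := by
            rw [tsub_add_cancel_of_le hvba.le]
        _ ≤ pathWeight w (p ++ [v]) + pathWeight w (v :: m) :=
            add_le_add_right (aux_gdist_le_pathWeight w h2) _
  · -- W_b case
    intro x hx
    obtain ⟨hxu, hxba⟩ := hx
    apply aux_key (fun y hy => hy.1) (aux_gdist_ne_top hw hu hxu hb)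
      (δ := gdist G w u x a - gdist G w u x b)
    · exact tsub_pos_of_lt hxba
    · intro v hvu hvW p m h1 h2
      have hvab : gdist G w u v a ≤ gdist G w u v b := by
        by_contra hcon
        exact hvW ⟨hvu, not_le.mp hcon⟩
      calc gdist G w u x b + (gdist G w u x a - gdist G w u x b)
          = (gdist G w u x a - gdist G w u x b) + gdist G w u x b := by ring
        _ = gdist G w u x a := tsub_add_cancel_of_le hxba.le
        _ ≤ pathWeight w (p ++ [v]) + gdist G w u v a := aux_gdist_triangle w h1 a
        _ ≤ pathWeight w (p ++ [v]) + gdist G w u v b := add_le_add_right hvab _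
        _ ≤ pathWeight w (p ++ [v]) + pathWeight w (v :: m) :=
            add_le_add_right (aux_gdist_le_pathWeight w h2) _
end
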